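/- (Vector-martingale Azuma–Hoeffding inequality of Pinelis.) Let (Ω, F, P) be a probability space with a filtration F⁰ ⊆ F¹ ⊆ … ⊆ F^K, and let ε₁, …, ε_K be an ℝ^d-valued martingale difference sequence: each ε_k is F^k-measurable with E[ε_k | F^{k−1}] = 0, and ‖ε_k‖ ≤ B_k almost surely for constants B_k > 0. Then for every λ > 0: P(‖Σ_{k=1}^K ε_k‖ ≥ λ) ≤ 4·exp(−λ²/(4·Σ_{k=1}^K B_k²)). The bound is dimension-free. -/

import Mathlib

open MeasureTheory ProbabilityTheory Real Finset

lemma choose_le_central (n k : ℕ) (hk : k ≤ n) : n.choose k ≤ (2*n).choose (2*k) := by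
  have h := Nat.add_choose_eq n n (2*k)
  rw [two_mul n] at *
  rw [h]
  calc n.choose k ≤ n.choose k * n.choose k := Nat.le_mul_of_pos_left _ (Nat.choose_pos hk)
    _ ≤ _ := by
      refine Finset.single_le_sum (f := fun ij : ℕ × ℕ => n.choose ij.1 * n.choose ij.2)
        (fun i _ => Nat.zero_le _) (a := (k, k)) ?_
      simp [Finset.mem_antidiagonal, two_mul]

lemma fact_ineq (n k : ℕ) (hk : k ≤ n) :
    (n.choose k : ℝ) * ((2*k).factorial * (2*(n-k)).factorial) ≤ (2*n).factorial := by
  have h2k : 2*k ≤ 2*n := by omega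
  have h1 := Nat.choose_mul_factorial_mul_factorial h2k
  have h2 : n.choose k * ((2*k).factorial * (2*(n-k)).factorial) ≤ (2*n).factorial := by
    have : 2*(n-k) = 2*n - 2*k := by omega
    rw [this]
    calc n.choose k * ((2*k).factorial * (2*n-2*k).factorial)
        ≤ (2*n).choose (2*k) * ((2*k).factorial * (2*n-2*k).factorial) :=
          Nat.mul_le_mul_right _ (choose_le_central n k hk)
      _ = (2*n).factorial := by rw [← h1]; ring
  exact_mod_cast h2

lemma cosh_sqrt_le (x y : ℝ) : Real.cosh (Real.sqrt (x^2 + y^2)) ≤ Real.cosh x * Real.cosh y := by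
  have hxy : (0:ℝ) ≤ x^2 + y^2 := by positivity
  set a : ℕ → ℝ := fun n => (x^2)^n / ((2*n).factorial : ℝ) with ha_def
  set b : ℕ → ℝ := fun n => (y^2)^n / ((2*n).factorial : ℝ) with hb_def
  have ha : HasSum a (Real.cosh x) := by
    refine (Real.hasSum_cosh x).congr_fun fun n => ?_
    simp [ha_def, pow_mul]
  have hb : HasSum b (Real.cosh y) := by
    refine (Real.hasSum_cosh y).congr_fun fun n => ?_
    simp [hb_def, pow_mul]
  have ha0 : ∀ n, 0 ≤ a n := fun n => by positivity
  have hb0 : ∀ n, 0 ≤ b n := fun n => by positivity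
  have han : Summable fun n => ‖a n‖ := by
    simpa [Real.norm_eq_abs, fun n => abs_of_nonneg (ha0 n)] using ha.summable
  have hbn : Summable fun n => ‖b n‖ := by
    simpa [Real.norm_eq_abs, fun n => abs_of_nonneg (hb0 n)] using hb.summable
  have hprod : Real.cosh x * Real.cosh y
      = ∑' n, ∑ kl ∈ antidiagonal n, a kl.1 * b kl.2 := by
    rw [← ha.tsum_eq, ← hb.tsum_eq]
    exact tsum_mul_tsum_eq_tsum_sum_antidiagonal_of_summable_norm han hbn
  have hsummR : Summable fun n => ∑ kl ∈ antidiagonal n, a kl.1 * b kl.2 :=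
    (summable_norm_sum_mul_antidiagonal_of_summable_norm han hbn).of_norm
  have hlhs : HasSum (fun n => (x^2+y^2)^n / ((2*n).factorial : ℝ))
      (Real.cosh (Real.sqrt (x^2+y^2))) := by
    refine (Real.hasSum_cosh _).congr_fun fun n => ?_
    rw [pow_mul, Real.sq_sqrt hxy]
  rw [hprod, ← hlhs.tsum_eq]
  refine hlhs.summable.tsum_le_tsum (fun n => ?_) hsummR
  rw [Finset.Nat.sum_antidiagonal_eq_sum_range_succ_mk, add_pow, Finset.sum_div]
  refine Finset.sum_le_sum fun k hk => ?_
  have hkn : k ≤ n := Nat.lt_succ_iff.mp (Finset.mem_range.mp hk)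
  simp only [ha_def, hb_def]
  rw [div_mul_div_comm]
  rw [div_le_div_iff₀ (by positivity) (by positivity)]
  have hx2 : (0:ℝ) ≤ (x^2)^k * (y^2)^(n-k) := by positivity
  calc (x^2)^k * (y^2)^(n-k) * (n.choose k : ℝ) * (((2*k).factorial : ℝ) * ((2*(n-k)).factorial : ℝ))
      = ((x^2)^k * (y^2)^(n-k)) * ((n.choose k : ℝ) * (((2*k).factorial : ℝ) * ((2*(n-k)).factorial : ℝ))) := by ring
    _ ≤ ((x^2)^k * (y^2)^(n-k)) * ((2*n).factorial : ℝ) := by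
        exact mul_le_mul_of_nonneg_left (fact_ineq n k hkn) hx2
    _ = (x^2)^k * (y^2)^(n-k) * ((2*n).factorial : ℝ) := by ring

lemma cosh_add_le (A t c : ℝ) (hc : 0 < c) (ht : |t| ≤ c) :
    Real.cosh (A + t) ≤ Real.cosh A * Real.cosh c + Real.sinh A * Real.sinh c * (t/c) := by
  have htc : |t/c| ≤ 1 := by
    rw [abs_div, abs_of_pos hc, div_le_one hc]; exact ht
  have h1 : Real.exp t ≤ Real.cosh c + (t/c) * Real.sinh c := by
    have := Real.exp_mul_le_cosh_add_mul_sinh htc c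
    rwa [div_mul_cancel₀ _ hc.ne'] at this
  have h2 : Real.exp (-t) ≤ Real.cosh c - (t/c) * Real.sinh c := by
    have habs : |-(t/c)| ≤ 1 := by rwa [abs_neg]
    have := Real.exp_mul_le_cosh_add_mul_sinh habs c
    rw [neg_mul, div_mul_cancel₀ _ hc.ne'] at this
    linarith
  have hA1 : (0:ℝ) < Real.exp A := Real.exp_pos A
  have hA2 : (0:ℝ) < Real.exp (-A) := Real.exp_pos _
  have eA : Real.cosh (A+t) = (Real.exp A * Real.exp t + Real.exp (-A) * Real.exp (-t))/2 := by
    rw [Real.cosh_eq, ← Real.exp_add, ← Real.exp_add]; ring_nf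
  have eB : Real.cosh A = (Real.exp A + Real.exp (-A))/2 := Real.cosh_eq A
  have eC : Real.sinh A = (Real.exp A - Real.exp (-A))/2 := Real.sinh_eq A
  rw [eA, eB, eC]
  nlinarith [mul_le_mul_of_nonneg_left h1 hA1.le, mul_le_mul_of_nonneg_left h2 hA2.le]

set_option maxHeartbeats 1000000 in
lemma pointwise_key {E : Type*} [NormedAddCommGroup E] [InnerProductSpace ℝ E]
    (x y : E) (s b : ℝ) (hs : 0 < s) (hb : 0 < b) (hy : ‖y‖ ≤ b) :
    Real.cosh (s*‖x+y‖) ≤ Real.cosh (s*‖x‖) * Real.cosh (s*b)^2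
      + (Real.sinh (s*b) / (s*b)) * Real.sinh (s*Real.sqrt (‖x‖^2+b^2))
        * (s / Real.sqrt (‖x‖^2+b^2)) * (inner ℝ x y : ℝ) := by
  set r := Real.sqrt (‖x‖^2 + b^2) with hr_def
  have hr2 : r^2 = ‖x‖^2 + b^2 := Real.sq_sqrt (by positivity)
  have hr0 : 0 ≤ r := Real.sqrt_nonneg _
  have hrb : b ≤ r := by nlinarith [norm_nonneg x]
  have hr : 0 < r := lt_of_lt_of_le hb hrb
  have hxr : ‖x‖ ≤ r := by nlinarith [norm_nonneg x]
  set t : ℝ := (inner ℝ x y : ℝ) with ht_def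
  have htabs : |t| ≤ ‖x‖ * b := by
    calc |t| ≤ ‖x‖ * ‖y‖ := abs_real_inner_le_norm x y
      _ ≤ ‖x‖ * b := by gcongr
  have htr2 : |t| ≤ r^2/2 := by nlinarith [sq_nonneg (‖x‖ - b), norm_nonneg x]
  have htlo : -(r^2/2) ≤ t := (abs_le.mp htr2).1
  have hdiv : -(r/2) ≤ t/r := by
    rw [neg_le, ← neg_div, div_le_iff₀ hr]; nlinarith
  have hpos : 0 ≤ r + t/r := by linarith
  have hrt : t/r * r = t := div_mul_cancel₀ t hr.ne'
  have hnormle : ‖x+y‖ ≤ r + t/r := by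
    have hsq : ‖x+y‖^2 ≤ (r + t/r)^2 := by
      have hexp : ‖x+y‖^2 = ‖x‖^2 + 2*t + ‖y‖^2 := by
        rw [ht_def]; exact norm_add_sq_real x y
      nlinarith [sq_nonneg (t/r), norm_nonneg y, sq_nonneg (‖y‖ - b), norm_nonneg x]
    nlinarith [norm_nonneg (x+y)]
  have step2 : Real.cosh (s*‖x+y‖) ≤ Real.cosh (s*r + s*(t/r)) := by
    apply Real.cosh_le_cosh.mpr
    rw [abs_of_nonneg (by positivity), abs_of_nonneg (by nlinarith)]
    nlinarith
  have htc : |s*(t/r)| ≤ s*b := by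
    rw [abs_mul, abs_of_pos hs, abs_div, abs_of_pos hr]
    have : |t| / r ≤ b := by rw [div_le_iff₀ hr]; nlinarith
    exact mul_le_mul_of_nonneg_left this hs.le
  have step3 := cosh_add_le (s*r) (s*(t/r)) (s*b) (by positivity) htc
  have hsr : Real.sqrt ((s*‖x‖)^2+(s*b)^2) = s * r := by
    rw [show (s*‖x‖)^2+(s*b)^2 = s^2*(‖x‖^2+b^2) by ring, Real.sqrt_mul (sq_nonneg s),
      Real.sqrt_sq hs.le, hr_def]
  have step4 : Real.cosh (s*r) ≤ Real.cosh (s*‖x‖) * Real.cosh (s*b) := by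
    have := cosh_sqrt_le (s*‖x‖) (s*b)
    rwa [hsr] at this
  have hcosh0 : (0:ℝ) ≤ Real.cosh (s*b) := (Real.cosh_pos _).le
  have heq : Real.sinh (s*r) * Real.sinh (s*b) * ((s*(t/r))/(s*b))
      = (Real.sinh (s*b) / (s*b)) * Real.sinh (s*r) * (s/r) * t := by
    field_simp
  calc Real.cosh (s*‖x+y‖) ≤ Real.cosh (s*r + s*(t/r)) := step2
    _ ≤ Real.cosh (s*r) * Real.cosh (s*b) + Real.sinh (s*r) * Real.sinh (s*b) * ((s*(t/r))/(s*b)) := step3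
    _ ≤ Real.cosh (s*‖x‖) * Real.cosh (s*b)^2
        + (Real.sinh (s*b) / (s*b)) * Real.sinh (s*r) * (s/r) * t := by
        rw [← heq]
        have := mul_le_mul_of_nonneg_right step4 hcosh0
        nlinarith

lemma coord_le_norm {d : ℕ} (v : EuclideanSpace ℝ (Fin d)) (i : Fin d) : |v i| ≤ ‖v‖ := by
  rw [EuclideanSpace.norm_eq, ← Real.sqrt_sq_eq_abs]
  apply Real.sqrt_le_sqrt
  calc v i ^ 2 ≤ ∑ j, v j ^ 2 :=
        Finset.single_le_sum (f := fun j => v j ^ 2) (fun j _ => sq_nonneg _) (Finset.mem_univ i)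
    _ = ∑ j, ‖v j‖ ^ 2 := by simp [Real.norm_eq_abs, sq_abs]

lemma integral_inner_eq_zero {Ω : Type*} {m m0 : MeasurableSpace Ω} (hm : m ≤ m0)
    (μ : Measure Ω) [IsProbabilityMeasure μ] {d : ℕ}
    (Z ε : Ω → EuclideanSpace ℝ (Fin d)) (C : ℝ)
    (hZm : StronglyMeasurable[m] Z) (hZb : ∀ᵐ ω ∂μ, ‖Z ω‖ ≤ C)
    (hεi : Integrable ε μ) (hε0 : μ[ε|m] =ᵐ[μ] 0) :
    ∫ ω, (inner ℝ (Z ω) (ε ω) : ℝ) ∂μ = 0 := by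
  have hεi_i : ∀ i : Fin d, Integrable (fun ω => ε ω i) μ := fun i =>
    (EuclideanSpace.proj (𝕜 := ℝ) i).integrable_comp hεi
  have hcond_i : ∀ i : Fin d, μ[fun ω => ε ω i|m] =ᵐ[μ] 0 := by
    intro i
    have h0 : (fun _ : Ω => (0:ℝ)) =ᵐ[μ] μ[fun ω => ε ω i|m] := by
      refine ae_eq_condExp_of_forall_setIntegral_eq hm (hεi_i i)
        (fun s _ _ => (integrable_zero _ _ _).integrableOn) (fun s hs hμs => ?_) ?_
      · have hset : ∫ ω in s, ε ω ∂μ = 0 := by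
          have h1 : ∫ ω in s, (μ[ε|m]) ω ∂μ = ∫ ω in s, ε ω ∂μ := setIntegral_condExp hm hεi hs
          have h2 : ∫ ω in s, (μ[ε|m]) ω ∂μ = 0 := by
            rw [integral_congr_ae (ae_restrict_of_ae hε0)]
            simp
          rw [← h1, h2]
        have hcomm := (EuclideanSpace.proj (𝕜 := ℝ) i).integral_comp_comm
          (hεi.restrict (s := s))
        rw [integral_zero]
        have : ∫ ω in s, ε ω i ∂μ = EuclideanSpace.proj (𝕜 := ℝ) i (∫ ω in s, ε ω ∂μ) := hcomm
        rw [this, hset]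
        simp
      · exact aestronglyMeasurable_const
    exact h0.symm
  have hZm_i : ∀ i : Fin d, StronglyMeasurable[m] (fun ω => Z ω i) := fun i =>
    (EuclideanSpace.proj (𝕜 := ℝ) i).continuous.comp_stronglyMeasurable hZm
  have hZb_i : ∀ i : Fin d, ∀ᵐ ω ∂μ, ‖Z ω i‖ ≤ C := fun i =>
    hZb.mono fun ω hω => (coord_le_norm (Z ω) i).trans hω
  have hint_i : ∀ i : Fin d, Integrable (fun ω => Z ω i * ε ω i) μ := fun i =>
    (hεi_i i).bdd_mul (((hZm_i i).mono hm).aestronglyMeasurable) (hZb_i i)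
  have hzero_i : ∀ i : Fin d, ∫ ω, Z ω i * ε ω i ∂μ = 0 := by
    intro i
    have hmul := condExp_stronglyMeasurable_mul_of_bound hm (hZm_i i) (hεi_i i) C (hZb_i i)
    have h1 : ∫ ω, Z ω i * ε ω i ∂μ = ∫ ω, (μ[(fun ω => Z ω i) * (fun ω => ε ω i)|m]) ω ∂μ :=
      (integral_condExp hm).symm
    rw [show (fun ω => Z ω i * ε ω i) = (fun ω => Z ω i) * (fun ω => ε ω i) from rfl] at h1 ⊢
    rw [h1]
    have h2 : μ[(fun ω => Z ω i) * (fun ω => ε ω i)|m]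
        =ᵐ[μ] (fun ω => Z ω i) * (fun _ => (0:ℝ)) := by
      refine hmul.trans ?_
      filter_upwards [hcond_i i] with ω hω
      simp [hω]
    rw [integral_congr_ae h2]
    simp
  have hinner : ∀ ω, (inner ℝ (Z ω) (ε ω) : ℝ) = ∑ i, Z ω i * ε ω i := by
    intro ω
    simp [PiLp.inner_apply, RCLike.inner_apply, conj_trivial, mul_comm]
  simp_rw [hinner]
  rw [integral_finset_sum _ (fun i _ => hint_i i)]
  exact Finset.sum_eq_zero fun i _ => hzero_i i

set_option maxHeartbeats 1000000 in
lemma pinelis_induction {d : ℕ}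
    {Ω : Type*} {m0 : MeasurableSpace Ω} (P : Measure Ω) [IsProbabilityMeasure P]
    (ℱ : Filtration ℕ m0) (K : ℕ)
    (ε : ℕ → Ω → EuclideanSpace ℝ (Fin d)) (B : ℕ → ℝ)
    (hB : ∀ k, 1 ≤ k → k ≤ K → 0 < B k)
    (hadapted : ∀ k, 1 ≤ k → k ≤ K → StronglyMeasurable[ℱ k] (ε k))
    (hmds : ∀ k, 1 ≤ k → k ≤ K → P[ε k|ℱ (k - 1)] =ᵐ[P] 0)
    (hbdd : ∀ k, 1 ≤ k → k ≤ K → ∀ᵐ ω ∂P, ‖ε k ω‖ ≤ B k)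
    (s : ℝ) (hs : 0 < s) :
    ∀ n, n ≤ K →
      Integrable (fun ω => Real.cosh (s * ‖∑ k ∈ Finset.Icc 1 n, ε k ω‖)) P ∧
      (∫ ω, Real.cosh (s * ‖∑ k ∈ Finset.Icc 1 n, ε k ω‖) ∂P)
        ≤ ∏ k ∈ Finset.Icc 1 n, Real.cosh (s * B k)^2 := by
  set S : ℕ → Ω → EuclideanSpace ℝ (Fin d) := fun n ω => ∑ k ∈ Finset.Icc 1 n, ε k ω with hS_def
  have hεm : ∀ k, 1 ≤ k → k ≤ K → StronglyMeasurable (ε k) := fun k h1 h2 =>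
    (hadapted k h1 h2).mono (ℱ.le k)
  have hεint : ∀ k, 1 ≤ k → k ≤ K → Integrable (ε k) P := fun k h1 h2 =>
    Integrable.mono' (integrable_const (B k)) (hεm k h1 h2).aestronglyMeasurable (hbdd k h1 h2)
  have hSm : ∀ n, n ≤ K → StronglyMeasurable[ℱ n] (S n) := by
    intro n hn
    have hrw : S n = ∑ k ∈ Finset.Icc 1 n, ε k := by
      funext ω
      rw [hS_def]
      simp [Finset.sum_apply]
    rw [hrw]
    refine Finset.stronglyMeasurable_sum _ fun k hk => ?_
    rw [Finset.mem_Icc] at hk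
    exact (hadapted k hk.1 (hk.2.trans hn)).mono (ℱ.mono hk.2)
  set M : ℕ → ℝ := fun n => ∑ k ∈ Finset.Icc 1 n, B k with hM_def
  have hM0 : ∀ n, n ≤ K → 0 ≤ M n := by
    intro n hn
    refine Finset.sum_nonneg fun k hk => ?_
    rw [Finset.mem_Icc] at hk
    exact (hB k hk.1 (hk.2.trans hn)).le
  have hSbdd : ∀ n, n ≤ K → ∀ᵐ ω ∂P, ‖S n ω‖ ≤ M n := by
    intro n hn
    have hall : ∀ᵐ ω ∂P, ∀ k ∈ Finset.Icc 1 n, ‖ε k ω‖ ≤ B k := by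
      rw [Filter.eventually_all_finset]
      intro k hk
      rw [Finset.mem_Icc] at hk
      exact hbdd k hk.1 (hk.2.trans hn)
    filter_upwards [hall] with ω hω
    calc ‖S n ω‖ ≤ ∑ k ∈ Finset.Icc 1 n, ‖ε k ω‖ := norm_sum_le _ _
      _ ≤ M n := Finset.sum_le_sum hω
  have hcoshint : ∀ n, n ≤ K → Integrable (fun ω => Real.cosh (s * ‖S n ω‖)) P := by
    intro n hn
    refine Integrable.mono' (integrable_const (Real.cosh (s * M n))) ?_ ?_
    · exact ((Real.continuous_cosh.comp (continuous_const.mul continuous_norm)).comp_stronglyMeasurable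
        ((hSm n hn).mono (ℱ.le n))).aestronglyMeasurable
    · filter_upwards [hSbdd n hn] with ω hω
      rw [Real.norm_eq_abs, abs_of_pos (Real.cosh_pos _)]
      apply Real.cosh_le_cosh.mpr
      rw [abs_of_nonneg (by positivity), abs_of_nonneg (mul_nonneg hs.le (hM0 n hn))]
      exact mul_le_mul_of_nonneg_left hω hs.le
  intro n
  induction n with
  | zero =>
    intro _
    have h0 : Finset.Icc 1 0 = (∅ : Finset ℕ) := Finset.Icc_eq_empty (by omega)
    simp [hS_def, h0]
  | succ n ih =>
    intro hn1
    have hnK : n ≤ K := (Nat.le_succ n).trans hn1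
    obtain ⟨ihi, ihb⟩ := ih hnK
    set b := B (n+1) with hb_def
    have hb : 0 < b := hB (n+1) (by omega) hn1
    set q : EuclideanSpace ℝ (Fin d) → ℝ := fun x => Real.sqrt (‖x‖^2 + b^2) with hq_def
    have hqb : ∀ x, b ≤ q x := by
      intro x
      rw [hq_def]
      rw [Real.le_sqrt' hb]
      exact le_add_of_nonneg_left (sq_nonneg _)
    have hqpos : ∀ x, 0 < q x := fun x => lt_of_lt_of_le hb (hqb x)
    have hqcont : Continuous q := by
      rw [hq_def]
      exact Real.continuous_sqrt.comp ((continuous_norm.pow 2).add continuous_const)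
    set c₁ : ℝ := Real.sinh (s*b) / (s*b) with hc1_def
    set g : EuclideanSpace ℝ (Fin d) → ℝ := fun x => c₁ * Real.sinh (s * q x) * (s / q x)
      with hg_def
    have hgcont : Continuous g := by
      rw [hg_def]
      exact (continuous_const.mul (Real.continuous_sinh.comp (continuous_const.mul hqcont))).mul
        (continuous_const.div hqcont fun x => (hqpos x).ne')
    set W : Ω → EuclideanSpace ℝ (Fin d) := fun ω => g (S n ω) • S n ω with hW_def
    have hWm : StronglyMeasurable[ℱ n] W :=
      (hgcont.smul continuous_id).comp_stronglyMeasurable (hSm n hnK)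
    set C : ℝ := |c₁| * Real.sinh (s*(M n + b)) * (s/b) * M n with hC_def
    have hMn0 := hM0 n hnK
    have hsinhnn : 0 ≤ Real.sinh (s*(M n + b)) := by
      rw [← Real.sinh_zero]
      exact Real.sinh_le_sinh.mpr (by positivity)
    have hCnn : 0 ≤ C := by
      rw [hC_def]
      have h1 : (0:ℝ) ≤ |c₁| := abs_nonneg _
      have h2 : (0:ℝ) ≤ s/b := by positivity
      positivity
    have hgbound : ∀ x, ‖x‖ ≤ M n → |g x| ≤ |c₁| * Real.sinh (s*(M n + b)) * (s/b) := by
      intro x hx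
      rw [hg_def]
      simp only []
      rw [abs_mul, abs_mul]
      have hq1 : q x ≤ M n + b := by
        rw [hq_def]
        rw [show M n + b = Real.sqrt ((M n + b)^2) from (Real.sqrt_sq (by positivity)).symm]
        exact Real.sqrt_le_sqrt (by nlinarith [norm_nonneg x])
      have hsqx : 0 ≤ s * q x := mul_nonneg hs.le (hqpos x).le
      have hs1 : |Real.sinh (s * q x)| ≤ Real.sinh (s*(M n + b)) := by
        rw [abs_of_nonneg (by rw [← Real.sinh_zero]; exact Real.sinh_le_sinh.mpr hsqx)]
        exact Real.sinh_le_sinh.mpr (mul_le_mul_of_nonneg_left hq1 hs.le)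
      have hs2 : |s / q x| ≤ s/b := by
        rw [abs_of_pos (div_pos hs (hqpos x))]
        exact div_le_div_of_nonneg_left hs.le hb (hqb x)
      have h3 : (0:ℝ) ≤ |c₁| * Real.sinh (s*(M n + b)) := mul_nonneg (abs_nonneg _) hsinhnn
      exact mul_le_mul (mul_le_mul_of_nonneg_left hs1 (abs_nonneg _)) hs2 (abs_nonneg _) h3
    have hWb : ∀ᵐ ω ∂P, ‖W ω‖ ≤ C := by
      filter_upwards [hSbdd n hnK] with ω hω
      rw [hW_def]
      simp only [norm_smul, Real.norm_eq_abs]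
      rw [hC_def]
      have h2 : (0:ℝ) ≤ |c₁| * Real.sinh (s*(M n + b)) * (s/b) := by
        have : (0:ℝ) ≤ s/b := by positivity
        have h1 : (0:ℝ) ≤ |c₁| := abs_nonneg _
        positivity
      exact mul_le_mul (hgbound _ hω) hω (norm_nonneg _) h2
    have hcond : P[ε (n+1)|ℱ n] =ᵐ[P] 0 := by
      have := hmds (n+1) (by omega) hn1
      simpa using this
    have hεi1 : Integrable (ε (n+1)) P := hεint (n+1) (by omega) hn1
    have hzero : ∫ ω, (inner ℝ (W ω) (ε (n+1) ω) : ℝ) ∂P = 0 :=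
      integral_inner_eq_zero (ℱ.le n) P W (ε (n+1)) C hWm hWb hεi1 hcond
    have hinner_meas : AEStronglyMeasurable (fun ω => (inner ℝ (W ω) (ε (n+1) ω) : ℝ)) P :=
      ((hWm.mono (ℱ.le n)).inner (hεm (n+1) (by omega) hn1)).aestronglyMeasurable
    have hinner_int : Integrable (fun ω => (inner ℝ (W ω) (ε (n+1) ω) : ℝ)) P := by
      refine Integrable.mono' (integrable_const (C * b)) hinner_meas ?_
      filter_upwards [hWb, hbdd (n+1) (by omega) hn1] with ω h1 h2
      rw [Real.norm_eq_abs]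
      calc |(inner ℝ (W ω) (ε (n+1) ω) : ℝ)| ≤ ‖W ω‖ * ‖ε (n+1) ω‖ := abs_real_inner_le_norm _ _
        _ ≤ C * b := mul_le_mul h1 h2 (norm_nonneg _) hCnn
    have hsplit : ∀ ω, S (n+1) ω = S n ω + ε (n+1) ω := by
      intro ω
      rw [hS_def]
      simp only []
      rw [← Finset.insert_Icc_right_eq_Icc_add_one (by omega : 1 ≤ n+1), Finset.sum_insert (by simp)]
      abel
    have hptwise : ∀ᵐ ω ∂P, Real.cosh (s * ‖S (n+1) ω‖)
        ≤ Real.cosh (s * ‖S n ω‖) * Real.cosh (s*b)^2 + (inner ℝ (W ω) (ε (n+1) ω) : ℝ) := by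
      filter_upwards [hbdd (n+1) (by omega) hn1] with ω hω
      have hkey := pointwise_key (S n ω) (ε (n+1) ω) s b hs hb hω
      rw [hsplit ω]
      have hWinner : (inner ℝ (W ω) (ε (n+1) ω) : ℝ)
          = g (S n ω) * (inner ℝ (S n ω) (ε (n+1) ω) : ℝ) := by
        rw [hW_def]; exact real_inner_smul_left _ _ _
      rw [hWinner, hg_def]
      convert hkey using 2
    have hrhs_int : Integrable (fun ω => Real.cosh (s * ‖S n ω‖) * Real.cosh (s*b)^2
        + (inner ℝ (W ω) (ε (n+1) ω) : ℝ)) P :=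
      ((hcoshint n hnK).mul_const _).add hinner_int
    refine ⟨hcoshint (n+1) hn1, ?_⟩
    calc ∫ ω, Real.cosh (s * ‖S (n+1) ω‖) ∂P
        ≤ ∫ ω, (Real.cosh (s * ‖S n ω‖) * Real.cosh (s*b)^2
            + (inner ℝ (W ω) (ε (n+1) ω) : ℝ)) ∂P :=
          integral_mono_ae (hcoshint (n+1) hn1) hrhs_int hptwise
      _ = (∫ ω, Real.cosh (s * ‖S n ω‖) ∂P) * Real.cosh (s*b)^2
            + ∫ ω, (inner ℝ (W ω) (ε (n+1) ω) : ℝ) ∂P := by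
          rw [integral_add ((hcoshint n hnK).mul_const _) hinner_int, integral_mul_const]
      _ = (∫ ω, Real.cosh (s * ‖S n ω‖) ∂P) * Real.cosh (s*b)^2 := by rw [hzero, add_zero]
      _ ≤ (∏ k ∈ Finset.Icc 1 n, Real.cosh (s * B k)^2) * Real.cosh (s*b)^2 := by
          exact mul_le_mul_of_nonneg_right ihb (by positivity)
      _ = ∏ k ∈ Finset.Icc 1 (n+1), Real.cosh (s * B k)^2 := by
          rw [← Finset.insert_Icc_right_eq_Icc_add_one (by omega : 1 ≤ n+1), Finset.prod_insert (by simp)]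
          rw [hb_def]
          ring

/-- Pinelis' vector-martingale Azuma–Hoeffding inequality:
For an `ℝ^d`-valued martingale difference sequence `ε₁, …, ε_K` with `‖ε_k‖ ≤ B_k` a.s.,
`P(‖∑ ε_k‖ ≥ λ) ≤ 4 exp(-λ²/(4 ∑ B_k²))` — a dimension-free bound. -/
theorem pinelis_azuma_hoeffding {d : ℕ} (hd : 1 ≤ d)
    {Ω : Type*} {m0 : MeasurableSpace Ω} (P : Measure Ω) [IsProbabilityMeasure P]
    (ℱ : Filtration ℕ m0) (K : ℕ)
    (ε : ℕ → Ω → EuclideanSpace ℝ (Fin d)) (B : ℕ → ℝ)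
    (hB : ∀ k, 1 ≤ k → k ≤ K → 0 < B k)
    (hadapted : ∀ k, 1 ≤ k → k ≤ K → StronglyMeasurable[ℱ k] (ε k))
    (hmds : ∀ k, 1 ≤ k → k ≤ K → P[ε k|ℱ (k - 1)] =ᵐ[P] 0)
    (hbdd : ∀ k, 1 ≤ k → k ≤ K → ∀ᵐ ω ∂P, ‖ε k ω‖ ≤ B k)
    (lam : ℝ) (hlam : 0 < lam) :
    P {ω | lam ≤ ‖∑ k ∈ Finset.Icc 1 K, ε k ω‖} ≤
      ENNReal.ofReal
        (4 * Real.exp (-lam ^ 2 / (4 * ∑ k ∈ Finset.Icc 1 K, B k ^ 2))) := by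
  rcases Nat.eq_zero_or_pos K with hK0 | hKpos
  · subst hK0
    have hempty : Finset.Icc 1 0 = (∅ : Finset ℕ) := Finset.Icc_eq_empty (by omega)
    have : {ω : Ω | lam ≤ ‖∑ k ∈ Finset.Icc 1 0, ε k ω‖} = ∅ := by
      ext ω
      simp [hempty, not_le, hlam]
    rw [this, measure_empty]
    exact bot_le
  · set V2 : ℝ := ∑ k ∈ Finset.Icc 1 K, B k ^ 2 with hV2_def
    have hV2 : 0 < V2 := by
      rw [hV2_def]
      refine Finset.sum_pos (fun k hk => ?_) ⟨1, Finset.mem_Icc.mpr ⟨le_refl 1, hKpos⟩⟩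
      rw [Finset.mem_Icc] at hk
      exact pow_pos (hB k hk.1 hk.2) 2
    set s : ℝ := lam / (2 * V2) with hs_def
    have hs : 0 < s := by rw [hs_def]; positivity
    obtain ⟨hint, hbound⟩ :=
      pinelis_induction P ℱ K ε B hB hadapted hmds hbdd s hs K (le_refl K)
    set I : ℝ := ∫ ω, Real.cosh (s * ‖∑ k ∈ Finset.Icc 1 K, ε k ω‖) ∂P with hI_def
    have hprod : (∏ k ∈ Finset.Icc 1 K, Real.cosh (s * B k)^2) ≤ Real.exp (s^2 * V2) := by
      have h1 : ∀ k ∈ Finset.Icc 1 K, Real.cosh (s * B k)^2 ≤ Real.exp ((s*B k)^2) := by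
        intro k _
        have := Real.cosh_le_exp_half_sq (s * B k)
        calc Real.cosh (s * B k)^2 ≤ Real.exp ((s*B k)^2/2)^2 := by
              have h0 : 0 ≤ Real.cosh (s * B k) := (Real.cosh_pos _).le
              exact pow_le_pow_left₀ h0 this 2
          _ = Real.exp ((s*B k)^2) := by
              rw [← Real.exp_nat_mul]
              congr 1
              push_cast
              ring
      calc (∏ k ∈ Finset.Icc 1 K, Real.cosh (s * B k)^2)
          ≤ ∏ k ∈ Finset.Icc 1 K, Real.exp ((s*B k)^2) := by
            refine Finset.prod_le_prod (fun k _ => by positivity) h1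
        _ = Real.exp (∑ k ∈ Finset.Icc 1 K, (s*B k)^2) := (Real.exp_sum _ _).symm
        _ = Real.exp (s^2 * V2) := by
            congr 1
            rw [hV2_def, Finset.mul_sum]
            exact Finset.sum_congr rfl fun k _ => by ring
    have hmarkov := mul_meas_ge_le_integral_of_nonneg
      (f := fun ω => Real.cosh (s * ‖∑ k ∈ Finset.Icc 1 K, ε k ω‖))
      (Filter.Eventually.of_forall fun ω => (Real.cosh_pos _).le) hint (Real.cosh (s * lam))
    have hsub : {ω : Ω | lam ≤ ‖∑ k ∈ Finset.Icc 1 K, ε k ω‖}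
        ⊆ {ω : Ω | Real.cosh (s * lam) ≤ Real.cosh (s * ‖∑ k ∈ Finset.Icc 1 K, ε k ω‖)} := by
      intro ω hω
      simp only [Set.mem_setOf_eq] at hω ⊢
      apply Real.cosh_le_cosh.mpr
      rw [abs_of_nonneg (by positivity), abs_of_nonneg (by positivity)]
      exact mul_le_mul_of_nonneg_left hω hs.le
    have htoReal : (P {ω : Ω | lam ≤ ‖∑ k ∈ Finset.Icc 1 K, ε k ω‖}).toReal
        ≤ (P {ω : Ω | Real.cosh (s * lam)
            ≤ Real.cosh (s * ‖∑ k ∈ Finset.Icc 1 K, ε k ω‖)}).toReal :=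
      ENNReal.toReal_mono (measure_ne_top P _) (measure_mono hsub)
    have hcoshpos : 0 < Real.cosh (s * lam) := Real.cosh_pos _
    have hch : Real.exp (s * lam) / 2 ≤ Real.cosh (s * lam) := by
      rw [Real.cosh_eq]
      have := (Real.exp_pos (-(s*lam))).le
      linarith
    have hIle : I ≤ Real.exp (s^2 * V2) := hbound.trans hprod
    have hP2 : (P {ω : Ω | Real.cosh (s * lam)
        ≤ Real.cosh (s * ‖∑ k ∈ Finset.Icc 1 K, ε k ω‖)}).toReal
        ≤ Real.exp (s^2 * V2) / Real.cosh (s * lam) := by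
      rw [le_div_iff₀ hcoshpos]
      calc _ = Real.cosh (s*lam) * (P _).toReal := mul_comm _ _
        _ ≤ I := hmarkov
        _ ≤ _ := hIle
    have hfinal : (P {ω : Ω | lam ≤ ‖∑ k ∈ Finset.Icc 1 K, ε k ω‖}).toReal
        ≤ 4 * Real.exp (-lam ^ 2 / (4 * V2)) := by
      have h2 : Real.exp (s^2 * V2) / Real.cosh (s * lam)
          ≤ Real.exp (s^2 * V2) / (Real.exp (s * lam) / 2) :=
        div_le_div_of_nonneg_left (Real.exp_pos _).le (by positivity) hch
      have h3 : Real.exp (s^2 * V2) / (Real.exp (s * lam) / 2)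
          = 2 * Real.exp (s^2 * V2 - s * lam) := by
        rw [Real.exp_sub]
        field_simp
      have h4 : s^2 * V2 - s * lam = -lam ^ 2 / (4 * V2) := by
        rw [hs_def]
        field_simp
        ring
      have h5 : (0:ℝ) < Real.exp (-lam ^ 2 / (4 * V2)) := Real.exp_pos _
      calc (P {ω : Ω | lam ≤ ‖∑ k ∈ Finset.Icc 1 K, ε k ω‖}).toReal
          ≤ Real.exp (s^2 * V2) / Real.cosh (s * lam) := htoReal.trans hP2
        _ ≤ 2 * Real.exp (-lam ^ 2 / (4 * V2)) := by rw [← h4, ← h3]; exact h2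
        _ ≤ 4 * Real.exp (-lam ^ 2 / (4 * V2)) := by linarith
    calc P {ω : Ω | lam ≤ ‖∑ k ∈ Finset.Icc 1 K, ε k ω‖}
        = ENNReal.ofReal ((P {ω : Ω | lam ≤ ‖∑ k ∈ Finset.Icc 1 K, ε k ω‖}).toReal) :=
          (ENNReal.ofReal_toReal (measure_ne_top P _)).symm
      _ ≤ ENNReal.ofReal (4 * Real.exp (-lam ^ 2 / (4 * V2))) :=
          ENNReal.ofReal_le_ofReal hfinal
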